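/- Let M be an n×n real symmetric matrix, θ the number of eigenvalues below tr(M)/n, and t an integer with 1 ≤ t ≤ n − θ. Then for every integer k with t ≤ k ≤ n, Σ_{i=1}^{k} λᵢ(M) ≤ (k/n)·tr(M) + √( tr((M − (tr(M)/n)·I)²) · (k − t²/(θ+t)) ). -/

import Mathlib

set_option maxHeartbeats 1000000
open Finset Matrix


lemma mylem {n : ℕ} (M : Matrix (Fin n) (Fin n) ℝ) (hM : M.IsHermitian) (μ : ℝ) :
    Matrix.trace ((M - μ • (1 : Matrix (Fin n) (Fin n) ℝ)) ^ 2) = ∑ i, (hM.eigenvalues i - μ)^2 := by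
  set U : Matrix (Fin n) (Fin n) ℝ := ↑hM.eigenvectorUnitary with hU
  have hUU : U * star U = 1 := (Unitary.mem_iff.mp hM.eigenvectorUnitary.prop).2
  have hUU' : star U * U = 1 := (Unitary.mem_iff.mp hM.eigenvectorUnitary.prop).1
  have hD : RCLike.ofReal ∘ hM.eigenvalues = hM.eigenvalues := by
    funext i; simp [RCLike.ofReal]
  have hspec : M = U * diagonal hM.eigenvalues * star U := by
    conv_lhs => rw [hM.spectral_theorem]
    rw [hD]
    rfl
  have hcent : M - μ • 1 = U * diagonal (fun i => hM.eigenvalues i - μ) * star U := by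
    have h1 : μ • (1 : Matrix (Fin n) (Fin n) ℝ) = U * (μ • 1) * star U := by
      rw [mul_smul_comm, mul_one, smul_mul_assoc, hUU]
    conv_lhs => rw [hspec, h1]
    rw [← sub_mul, ← mul_sub]
    congr 2
    rw [← diagonal_one, ← diagonal_smul, diagonal_sub]
    congr 1
    funext i
    simp
  rw [hcent, pow_two]
  have h2 : U * diagonal (fun i => hM.eigenvalues i - μ) * star U * (U * diagonal (fun i => hM.eigenvalues i - μ) * star U) = U * (diagonal (fun i => hM.eigenvalues i - μ) * diagonal (fun i => hM.eigenvalues i - μ)) * star U := by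
    rw [Matrix.mul_assoc, Matrix.mul_assoc, Matrix.mul_assoc]
    rw [← Matrix.mul_assoc (star U), hUU', Matrix.one_mul]
    rw [← mul_assoc (diagonal fun i => hM.eigenvalues i - μ), ← mul_assoc U]
  rw [h2, Matrix.trace_mul_cycle, ← Matrix.mul_assoc, hUU', Matrix.one_mul,
    diagonal_mul_diagonal, trace_diagonal]
  exact Finset.sum_congr rfl fun i _ => (pow_two _).symm

lemma mylem2 {n : ℕ} (M : Matrix (Fin n) (Fin n) ℝ) (hM : M.IsHermitian) :
    M.trace = ∑ i, hM.eigenvalues i := by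
  set U : Matrix (Fin n) (Fin n) ℝ := ↑hM.eigenvectorUnitary with hU
  have hUU' : star U * U = 1 := (Unitary.mem_iff.mp hM.eigenvectorUnitary.prop).1
  have hD : RCLike.ofReal ∘ hM.eigenvalues = hM.eigenvalues := by
    funext i; simp [RCLike.ofReal]
  have hspec : M = U * diagonal hM.eigenvalues * star U := by
    conv_lhs => rw [hM.spectral_theorem]
    rw [hD]
    rfl
  conv_lhs => rw [hspec]
  rw [Matrix.trace_mul_cycle, hUU', Matrix.one_mul, trace_diagonal]


lemma card_lt_fin {n k : ℕ} (hkn : k ≤ n) :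
    (Finset.univ.filter (fun i : Fin n => (i : ℕ) < k)).card = k := by
  rw [Finset.card_filter]
  rw [Fin.sum_univ_eq_sum_range (fun i => if i < k then 1 else 0)]
  rw [← Finset.card_filter]
  have : (Finset.range n).filter (fun i => i < k) = Finset.range k := by
    ext i; simp; omega
  rw [this, Finset.card_range]

lemma card_ge_fin {n m : ℕ} :
    (Finset.univ.filter (fun i : Fin n => m ≤ (i : ℕ))).card = n - m := by
  rw [Finset.card_filter]
  rw [Fin.sum_univ_eq_sum_range (fun i => if m ≤ i then 1 else 0)]
  rw [← Finset.card_filter]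
  have : (Finset.range n).filter (fun i => m ≤ i) = Finset.Ico m n ∪ ∅ := by
    ext i; simp; omega
  rw [this, Finset.union_empty, Nat.card_Ico]

lemma core {n : ℕ} (y : Fin n → ℝ) (hsum : ∑ i, y i = 0)
    (θ t k : ℕ) (hθn : θ ≤ n)
    (hpos : ∀ i : Fin n, (i : ℕ) < n - θ → 0 ≤ y i)
    (hneg : ∀ i : Fin n, n - θ ≤ (i : ℕ) → y i < 0)
    (ht1 : 1 ≤ t) (htm : t ≤ n - θ) (hkt : t ≤ k) (hkn : k ≤ n) :
    ∑ i ∈ Finset.univ.filter (fun i : Fin n => (i : ℕ) < k), y i ≤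
      Real.sqrt ((∑ i, y i ^ 2) * ((k : ℝ) - (t : ℝ) ^ 2 / ((θ : ℝ) + t))) := by
  set m := n - θ with hm
  set T := ∑ i, y i ^ 2 with hT
  have hT0 : 0 ≤ T := Finset.sum_nonneg fun i _ => sq_nonneg _
  have ht0 : (0:ℝ) < t := by exact_mod_cast ht1
  have hdivt : (t:ℝ)^2/((θ:ℝ)+t) ≤ t := by
    rw [div_le_iff₀ (by positivity)]
    nlinarith [Nat.cast_nonneg (α := ℝ) θ]
  have hc0 : 0 ≤ (k : ℝ) - (t : ℝ) ^ 2 / ((θ : ℝ) + t) := by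
    have : (t:ℝ) ≤ k := by exact_mod_cast hkt
    linarith
  rcases Nat.eq_zero_or_pos θ with hθ0 | hθ1
  · -- all nonnegative, sum over subset ≤ 0
    have hall : ∀ i : Fin n, 0 ≤ y i := fun i => hpos i (by omega)
    have h1 : ∑ i ∈ Finset.univ.filter (fun i : Fin n => (i : ℕ) < k), y i ≤ ∑ i, y i :=
      Finset.sum_le_sum_of_subset_of_nonneg (Finset.filter_subset _ _)
        (fun i _ _ => hall i)
    rw [hsum] at h1
    exact h1.trans (Real.sqrt_nonneg _)
  · set k' := min k m with hk'
    have hk't : t ≤ k' := le_min hkt htm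
    have hk'n : k' ≤ n := le_trans (min_le_left _ _) hkn
    have hk'1 : 1 ≤ k' := le_trans ht1 hk't
    have hss' : ∑ i ∈ Finset.univ.filter (fun i : Fin n => (i : ℕ) < k), y i ≤
        ∑ i ∈ Finset.univ.filter (fun i : Fin n => (i : ℕ) < k'), y i := by
      have hsub : Finset.univ.filter (fun i : Fin n => (i : ℕ) < k') ⊆
          Finset.univ.filter (fun i : Fin n => (i : ℕ) < k) := by
        intro i hi
        simp only [Finset.mem_filter, Finset.mem_univ, true_and] at hi ⊢
        omega
      rw [← Finset.sum_sdiff hsub]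
      have hd : ∑ i ∈ (Finset.univ.filter (fun i : Fin n => (i : ℕ) < k)) \
          (Finset.univ.filter (fun i : Fin n => (i : ℕ) < k')), y i ≤ 0 := by
        apply Finset.sum_nonpos
        intro i hi
        simp only [Finset.mem_sdiff, Finset.mem_filter, Finset.mem_univ, true_and] at hi
        exact le_of_lt (hneg i (by omega))
      linarith
    set s' := ∑ i ∈ Finset.univ.filter (fun i : Fin n => (i : ℕ) < k'), y i with hs'def
    have hs'0 : 0 ≤ s' := by
      apply Finset.sum_nonneg
      intro i hi
      simp only [Finset.mem_filter, Finset.mem_univ, true_and] at hi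
      exact hpos i (by omega)
    set A := ∑ i ∈ Finset.univ.filter (fun i : Fin n => (i : ℕ) < k'), y i ^ 2 with hA
    have hCS1 : s' ^ 2 ≤ (k' : ℝ) * A := by
      have h := sq_sum_le_card_mul_sum_sq
        (s := Finset.univ.filter (fun i : Fin n => (i : ℕ) < k')) (f := y)
      rwa [card_lt_fin hk'n] at h
    set G := Finset.univ.filter (fun i : Fin n => m ≤ (i : ℕ)) with hG
    have hGcard : G.card = θ := by
      rw [hG, card_ge_fin]; omega
    set B := ∑ i ∈ G, y i ^ 2 with hB
    set P := ∑ i ∈ Finset.univ.filter (fun i : Fin n => (i : ℕ) < m), y i with hP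
    have hkey : P + ∑ i ∈ G, y i = 0 := by
      rw [hP, hG]
      have := Finset.sum_filter_add_sum_filter_not Finset.univ
        (fun i : Fin n => (i : ℕ) < m) y
      rw [hsum] at this
      rw [← this]
      congr 1
      apply Finset.sum_congr _ (fun _ _ => rfl)
      apply Finset.filter_congr
      intro i _
      simp [not_lt]
    have hs'P : s' ≤ P := by
      apply Finset.sum_le_sum_of_subset_of_nonneg
      · intro i hi
        simp only [Finset.mem_filter, Finset.mem_univ, true_and] at hi ⊢
        omega
      · intro i hi _
        simp only [Finset.mem_filter, Finset.mem_univ, true_and] at hi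
        exact hpos i hi
    have hCS2 : P ^ 2 ≤ (θ : ℝ) * B := by
      have h := sq_sum_le_card_mul_sum_sq (s := G) (f := y)
      rw [hGcard] at h
      have hPG : ∑ i ∈ G, y i = -P := by linarith
      rw [hPG] at h
      rw [hB]
      nlinarith [h]
    have hs'2B : s' ^ 2 ≤ (θ : ℝ) * B := le_trans (pow_le_pow_left₀ hs'0 hs'P 2) hCS2
    have hAB : A + B ≤ T := by
      have hdisj : Disjoint (Finset.univ.filter (fun i : Fin n => (i : ℕ) < k')) G := by
        rw [Finset.disjoint_left]
        intro i hi hig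
        simp only [hG, Finset.mem_filter, Finset.mem_univ, true_and] at hi hig
        omega
      rw [hA, hB, ← Finset.sum_union hdisj, hT]
      apply Finset.sum_le_sum_of_subset_of_nonneg (Finset.subset_univ _)
      intro i _ _
      exact sq_nonneg _
    have hk'R : (0:ℝ) < k' := by exact_mod_cast hk'1
    have hθR : (0:ℝ) < θ := by exact_mod_cast hθ1
    have hmain : s' ^ 2 * ((k' : ℝ) + θ) ≤ T * ((k' : ℝ) * θ) := by
      nlinarith [mul_le_mul_of_nonneg_left hCS1 hθR.le,
        mul_le_mul_of_nonneg_left hs'2B hk'R.le,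
        mul_le_mul_of_nonneg_left hAB (mul_nonneg hk'R.le hθR.le)]
    have hmono : (k' : ℝ) * θ / ((k' : ℝ) + θ) ≤ (k : ℝ) - (t : ℝ) ^ 2 / ((θ : ℝ) + t) := by
      have h1 : (k' : ℝ) * θ / ((k' : ℝ) + θ) = (k' : ℝ) - (k' : ℝ) ^ 2 / ((k' : ℝ) + θ) := by
        field_simp
        ring
      have h2 : (t : ℝ) ^ 2 / ((θ : ℝ) + t) ≤ (k' : ℝ) ^ 2 / ((k' : ℝ) + θ) := by
        rw [div_le_div_iff₀ (by positivity) (by positivity)]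
        have htk' : (t : ℝ) ≤ k' := by exact_mod_cast hk't
        have e1 : (0:ℝ) ≤ (θ:ℝ) * (((k':ℝ) - t) * ((k':ℝ) + t)) :=
          mul_nonneg hθR.le (mul_nonneg (sub_nonneg.mpr htk') (by positivity))
        have e2 : (0:ℝ) ≤ (t:ℝ) * (k':ℝ) * ((k':ℝ) - t) :=
          mul_nonneg (mul_nonneg ht0.le hk'R.le) (sub_nonneg.mpr htk')
        linarith [e1, e2]
      have h3 : (k' : ℝ) ≤ k := by exact_mod_cast min_le_left k m
      linarith
    have hfin : s' ^ 2 ≤ T * ((k : ℝ) - (t : ℝ) ^ 2 / ((θ : ℝ) + t)) := by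
      have h4 : s' ^ 2 ≤ T * ((k' : ℝ) * θ / ((k' : ℝ) + θ)) := by
        rw [show T * ((k' : ℝ) * θ / ((k' : ℝ) + θ)) = T * ((k' : ℝ) * θ) / ((k' : ℝ) + θ) from by ring,
          le_div_iff₀ (by positivity)]
        linarith
      exact h4.trans (mul_le_mul_of_nonneg_left hmono hT0)
    have h5 : s' ≤ Real.sqrt (T * ((k : ℝ) - (t : ℝ) ^ 2 / ((θ : ℝ) + t))) := by
      rw [show s' = Real.sqrt (s' ^ 2) from (Real.sqrt_sq hs'0).symm]
      exact Real.sqrt_le_sqrt hfin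
    linarith

/-- Upper bound for the sum of the `k` largest eigenvalues of a
real symmetric matrix `M`, where `θ` is the number of eigenvalues below
`tr(M)/n` and `1 ≤ t ≤ n − θ`: for `t ≤ k ≤ n`,
`∑_{i=1}^k λᵢ(M) ≤ (k/n) tr(M) + √(tr((M − (tr(M)/n)I)²) (k − t²/(θ+t)))`. -/
theorem stmt6 {n : ℕ} (hn : 1 ≤ n) (M : Matrix (Fin n) (Fin n) ℝ)
    (hM : M.IsHermitian)
    (lam : Fin n → ℝ) (σ : Equiv.Perm (Fin n))
    (hlam : lam = hM.eigenvalues ∘ σ) (hdec : Antitone lam)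
    (θ : ℕ)
    (hθ : θ = (Finset.univ.filter (fun i => lam i < M.trace / n)).card)
    (t : ℕ) (ht1 : 1 ≤ t) (htn : t ≤ n - θ)
    (k : ℕ) (hkt : t ≤ k) (hkn : k ≤ n) :
    ∑ i ∈ Finset.univ.filter (fun i : Fin n => (i : ℕ) < k), lam i ≤
      ((k : ℝ) / n) * M.trace +
        Real.sqrt
          (Matrix.trace ((M - (M.trace / n) • (1 : Matrix (Fin n) (Fin n) ℝ)) ^ 2) *
            ((k : ℝ) - (t : ℝ) ^ 2 / ((θ : ℝ) + t))) := by
  set μ : ℝ := M.trace / n with hμ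
  have hnR : (0:ℝ) < n := by exact_mod_cast hn
  have hsumlam : ∑ i, lam i = M.trace := by
    rw [hlam, mylem2 M hM]
    exact Equiv.sum_comp σ hM.eigenvalues
  have hsumy : ∑ i, (lam i - μ) = 0 := by
    rw [Finset.sum_sub_distrib, hsumlam, Finset.sum_const, Finset.card_univ,
      Fintype.card_fin, nsmul_eq_mul, hμ]
    field_simp
    ring
  have hθn : θ ≤ n := by
    rw [hθ]
    simpa using Finset.card_filter_le Finset.univ (fun i : Fin n => lam i < μ)
  have hpos : ∀ i : Fin n, (i : ℕ) < n - θ → 0 ≤ lam i - μ := by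
    intro i hi
    by_contra hcon
    push_neg at hcon
    have hlamμ : lam i < μ := by linarith
    have hsub : Finset.Ici i ⊆ Finset.univ.filter (fun j : Fin n => lam j < μ) := by
      intro j hj
      exact Finset.mem_filter.mpr ⟨Finset.mem_univ _,
        lt_of_le_of_lt (hdec (Finset.mem_Ici.mp hj)) hlamμ⟩
    have hcard := Finset.card_le_card hsub
    rw [Fin.card_Ici, ← hθ] at hcard
    omega
  have hneg : ∀ i : Fin n, n - θ ≤ (i : ℕ) → lam i - μ < 0 := by
    intro i hi
    by_contra hcon
    push_neg at hcon
    have hlamμ : μ ≤ lam i := by linarith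
    have hsub : Finset.univ.filter (fun j : Fin n => lam j < μ) ⊆ Finset.Ioi i := by
      intro j hj
      rw [Finset.mem_filter] at hj
      rw [Finset.mem_Ioi]
      by_contra hji
      push_neg at hji
      exact absurd hj.2 (not_lt.mpr (le_trans hlamμ (hdec hji)))
    have hcard := Finset.card_le_card hsub
    rw [Fin.card_Ioi, ← hθ] at hcard
    have hin : (i : ℕ) < n := i.isLt
    omega
  have hT : Matrix.trace ((M - μ • (1 : Matrix (Fin n) (Fin n) ℝ)) ^ 2)
      = ∑ i, (lam i - μ) ^ 2 := by
    rw [mylem M hM μ, hlam]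
    exact (Equiv.sum_comp σ (fun j => (hM.eigenvalues j - μ) ^ 2)).symm
  have hcore := core (fun i => lam i - μ) hsumy θ t k hθn hpos hneg ht1 htn hkt hkn
  rw [← hT] at hcore
  have hsplit : ∑ i ∈ Finset.univ.filter (fun i : Fin n => (i : ℕ) < k), lam i
      = (∑ i ∈ Finset.univ.filter (fun i : Fin n => (i : ℕ) < k), (lam i - μ)) + (k : ℝ) * μ := by
    rw [Finset.sum_sub_distrib, Finset.sum_const, card_lt_fin hkn, nsmul_eq_mul]
    ring
  rw [hsplit]
  have hkμ : (k : ℝ) * μ = ((k : ℝ) / n) * M.trace := by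
    rw [hμ]; field_simp
  rw [hkμ]
  linarith
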